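/- On a probability space let X take values in a finite set 𝒳 and A ∈ {0,1} be a binary treatment. For each a ∈ {0,1}, let Y(a) be an integrable real random variable and K(a) a random variable in {1,…,κ} (the counterfactual outcome and failure type under treatment a). Assume consistency, Y = Σ_{a∈{0,1}} 1(A=a)·Y(a) and K = Σ_{a∈{0,1}} 1(A=a)·K(a), and sequential ignorability in the form: for all a, k and all x with P(X=x,A=a) > 0, P(K(a)=k | X=x, A=a) = P(K(a)=k | X=x) and E[Y(a)·1(K(a)=k) | X=x, A=a] = E[Y(a)·1(K(a)=k) | X=x]. Then for every a and every x with P(X=x,A=a,K=k) > 0 for all k, E[Y(a) | X=x] = Σ_{k=1}^{κ} P(K=k | X=x, A=a)·E[Y | X=x, A=a, K=k]. -/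
import Mathlib

open MeasureTheory ProbabilityTheory

lemma integrable_cond_aux {Ω : Type*} [MeasurableSpace Ω]
    (μ : Measure Ω) {s : Set Ω} (hs : μ s ≠ 0) {f : Ω → ℝ}
    (hf : Integrable f μ) : Integrable f (μ[|s]) := by
  unfold ProbabilityTheory.cond
  exact (hf.restrict).smul_measure (ENNReal.inv_ne_top.mpr hs)

lemma integral_cond_aux {Ω : Type*} [MeasurableSpace Ω] (μ : Measure Ω) (s : Set Ω)
    (f : Ω → ℝ) : ∫ ω, f ω ∂(μ[|s]) = ((μ s)⁻¹).toReal • ∫ ω, f ω ∂(μ.restrict s) := by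
  unfold ProbabilityTheory.cond
  rw [integral_smul_measure]

/-- Under consistency and sequential ignorability (for the counterfactual
pair `(Y(a), K(a))`), the mean counterfactual outcome under treatment `a` is identified by
averaging the observed cause-specific conditional means with the observed cause
probabilities: `E[Y(a) | X=x] = Σₖ P(K=k | X=x, A=a)·E[Y | X=x, A=a, K=k]`. -/
theorem sequential_ignorability_identification
    {Ω 𝒳 : Type*} [MeasurableSpace Ω] [Fintype 𝒳] [MeasurableSpace 𝒳]
    [MeasurableSingletonClass 𝒳]
    (μ : Measure Ω) [IsProbabilityMeasure μ]
    (κ : ℕ) (X : Ω → 𝒳) (A K : Ω → ℕ) (Y : Ω → ℝ)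
    (Ycf : ℕ → Ω → ℝ) (Kcf : ℕ → Ω → ℕ)
    (hX : Measurable X) (hA : Measurable A) (hK : Measurable K) (hY : Measurable Y)
    (hYcf : ∀ a, Measurable (Ycf a)) (hKcf : ∀ a, Measurable (Kcf a))
    (hYint : ∀ a, Integrable (Ycf a) μ)
    (hA01 : ∀ ω, A ω ≤ 1)
    (hKcfκ : ∀ a ω, a ≤ 1 → Kcf a ω ∈ Finset.Icc 1 κ)
    -- consistency: Y = Σₐ 1(A=a)·Y(a) and K = Σₐ 1(A=a)·K(a)
    (hconsY : ∀ ω, Y ω = ∑ a ∈ Finset.range 2,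
        (if A ω = a then (1 : ℝ) else 0) * Ycf a ω)
    (hconsK : ∀ ω, K ω = ∑ a ∈ Finset.range 2,
        (if A ω = a then 1 else 0) * Kcf a ω)
    -- sequential ignorability
    (hig1 : ∀ a k x, a ≤ 1 → μ {ω | X ω = x ∧ A ω = a} ≠ 0 →
      (μ[|{ω | X ω = x ∧ A ω = a}] {ω | Kcf a ω = k}).toReal =
        (μ[|{ω | X ω = x}] {ω | Kcf a ω = k}).toReal)
    (hig2 : ∀ a k x, a ≤ 1 → μ {ω | X ω = x ∧ A ω = a} ≠ 0 →
      (∫ ω, Ycf a ω * (if Kcf a ω = k then (1 : ℝ) else 0)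
          ∂(μ[|{ω | X ω = x ∧ A ω = a}])) =
        ∫ ω, Ycf a ω * (if Kcf a ω = k then (1 : ℝ) else 0) ∂(μ[|{ω | X ω = x}])) :
    ∀ a x, a ≤ 1 →
      (∀ k ∈ Finset.Icc 1 κ, μ {ω | X ω = x ∧ A ω = a ∧ K ω = k} ≠ 0) →
      (∫ ω, Ycf a ω ∂(μ[|{ω | X ω = x}])) =
        ∑ k ∈ Finset.Icc 1 κ,
          (μ[|{ω | X ω = x ∧ A ω = a}] {ω | K ω = k}).toReal *
            ∫ ω, Y ω ∂(μ[|{ω | X ω = x ∧ A ω = a ∧ K ω = k}]) := by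
  intro a x ha hk
  -- Ω is nonempty, hence κ ≥ 1
  have hΩ : Nonempty Ω := by
    by_contra h
    rw [not_nonempty_iff] at h
    have h1 : μ Set.univ = 1 := measure_univ
    rw [Set.univ_eq_empty_iff.mpr h, measure_empty] at h1
    exact zero_ne_one h1
  obtain ⟨ω0⟩ := hΩ
  have hκ1 : 1 ≤ κ :=
    le_trans (Finset.mem_Icc.mp (hKcfκ a ω0 ha)).1 (Finset.mem_Icc.mp (hKcfκ a ω0 ha)).2
  have h1mem : (1 : ℕ) ∈ Finset.Icc 1 κ := Finset.mem_Icc.mpr ⟨le_refl 1, hκ1⟩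
  -- measurability of sets
  have hSm : MeasurableSet {ω | X ω = x ∧ A ω = a} :=
    (hX (measurableSet_singleton x)).inter (hA (measurableSet_singleton a))
  have hTm : MeasurableSet {ω | X ω = x} := hX (measurableSet_singleton x)
  -- positivity of measures
  have hS0 : μ {ω | X ω = x ∧ A ω = a} ≠ 0 := fun h =>
    hk 1 h1mem (measure_mono_null (Set.setOf_subset_setOf.mpr fun ω hω => ⟨hω.1, hω.2.1⟩) h)
  have hT0 : μ {ω | X ω = x} ≠ 0 := fun h =>
    hS0 (measure_mono_null (Set.setOf_subset_setOf.mpr fun ω hω => hω.1) h)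
  -- consistency pointwise
  have hYa : ∀ ω, A ω = a → Y ω = Ycf a ω := by
    intro ω hω
    rw [hconsY ω, Finset.sum_eq_single a]
    · simp [hω]
    · intro b _ hba
      simp [hω, Ne.symm hba]
    · intro hna
      exact absurd (Finset.mem_range.mpr (Nat.lt_succ_of_le ha)) hna
  have hKa : ∀ ω, A ω = a → K ω = Kcf a ω := by
    intro ω hω
    rw [hconsK ω, Finset.sum_eq_single a]
    · simp [hω]
    · intro b _ hba
      simp [hω, Ne.symm hba]
    · intro hna
      exact absurd (Finset.mem_range.mpr (Nat.lt_succ_of_le ha)) hna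
  -- integrability
  have hFint : ∀ k, Integrable (fun ω => Ycf a ω * (if Kcf a ω = k then (1:ℝ) else 0)) μ := by
    intro k
    have h := (hYint a).indicator (hKcf a (measurableSet_singleton k))
    refine h.congr (ae_of_all _ fun ω => ?_)
    by_cases h' : Kcf a ω = k <;> simp [Set.indicator_apply, h']
  have hYI : Integrable Y μ := by
    have hsum : Integrable
        (fun ω => ∑ b ∈ Finset.range 2, (if A ω = b then (1:ℝ) else 0) * Ycf b ω) μ := by
      apply integrable_finset_sum
      intro b _
      have h := (hYint b).indicator (hA (measurableSet_singleton b))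
      refine h.congr (ae_of_all _ fun ω => ?_)
      by_cases h' : A ω = b <;> simp [Set.indicator_apply, h']
    exact hsum.congr (ae_of_all _ fun ω => (hconsY ω).symm)
  have hGint : ∀ k, Integrable (fun ω => Y ω * (if K ω = k then (1:ℝ) else 0)) μ := by
    intro k
    have h := hYI.indicator (hK (measurableSet_singleton k))
    refine h.congr (ae_of_all _ fun ω => ?_)
    by_cases h' : K ω = k <;> simp [Set.indicator_apply, h']
  -- step 1 : expand by cause indicator
  have step1 : ∫ ω, Ycf a ω ∂(μ[|{ω | X ω = x}]) =
      ∑ k ∈ Finset.Icc 1 κ,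
        ∫ ω, Ycf a ω * (if Kcf a ω = k then (1:ℝ) else 0) ∂(μ[|{ω | X ω = x}]) := by
    rw [← integral_finset_sum _ (fun k _ => integrable_cond_aux μ hT0 (hFint k))]
    refine integral_congr_ae (ae_of_all _ fun ω => ?_)
    show Ycf a ω = ∑ i ∈ Finset.Icc 1 κ, Ycf a ω * if Kcf a ω = i then (1:ℝ) else 0
    have hsum : ∑ k ∈ Finset.Icc 1 κ, (if Kcf a ω = k then (1:ℝ) else 0) = 1 := by
      rw [Finset.sum_ite_eq]
      simp [hKcfκ a ω ha]
    rw [← Finset.mul_sum, hsum, mul_one]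
  -- step 2 : ignorability + consistency on {X=x, A=a}
  have step2 : ∀ k ∈ Finset.Icc 1 κ,
      (∫ ω, Ycf a ω * (if Kcf a ω = k then (1:ℝ) else 0) ∂(μ[|{ω | X ω = x}])) =
      ∫ ω, Y ω * (if K ω = k then (1:ℝ) else 0) ∂(μ[|{ω | X ω = x ∧ A ω = a}]) := by
    intro k _
    rw [← hig2 a k x ha hS0]
    have hae : ∀ᵐ ω ∂(μ[|{ω | X ω = x ∧ A ω = a}]), ω ∈ {ω | X ω = x ∧ A ω = a} := by
      rw [ae_iff]
      have : {ω | ¬ ω ∈ {ω | X ω = x ∧ A ω = a}} = {ω | X ω = x ∧ A ω = a}ᶜ := rfl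
      rw [this, cond_apply hSm]
      simp
    refine integral_congr_ae ?_
    filter_upwards [hae] with ω hω
    rw [hYa ω hω.2, hKa ω hω.2]
  -- step 3 : conditional decomposition
  have step3 : ∀ k ∈ Finset.Icc 1 κ,
      (∫ ω, Y ω * (if K ω = k then (1:ℝ) else 0) ∂(μ[|{ω | X ω = x ∧ A ω = a}])) =
      (μ[|{ω | X ω = x ∧ A ω = a}] {ω | K ω = k}).toReal *
        ∫ ω, Y ω ∂(μ[|{ω | X ω = x ∧ A ω = a ∧ K ω = k}]) := by
    intro k hkmem
    have hKkm : MeasurableSet {ω | K ω = k} := hK (measurableSet_singleton k)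
    have hEeq : {ω | X ω = x ∧ A ω = a ∧ K ω = k} =
        {ω | X ω = x ∧ A ω = a} ∩ {ω | K ω = k} := by
      ext ω; simp only [Set.mem_inter_iff, Set.mem_setOf_eq]; tauto
    have hE0 : μ ({ω | X ω = x ∧ A ω = a} ∩ {ω | K ω = k}) ≠ 0 := by
      rw [← hEeq]; exact hk k hkmem
    have hEfin : μ ({ω | X ω = x ∧ A ω = a} ∩ {ω | K ω = k}) ≠ ⊤ :=
      (measure_lt_top μ _).ne
    -- rewrite both integrals over restricted measures
    rw [hEeq, integral_cond_aux, integral_cond_aux]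
    have hres : ∫ ω, Y ω * (if K ω = k then (1:ℝ) else 0)
          ∂(μ.restrict {ω | X ω = x ∧ A ω = a}) =
        ∫ ω, Y ω ∂(μ.restrict ({ω | X ω = x ∧ A ω = a} ∩ {ω | K ω = k})) := by
      have hind : (fun ω => Y ω * (if K ω = k then (1:ℝ) else 0)) =
          Set.indicator {ω | K ω = k} Y := by
        funext ω
        by_cases h' : K ω = k <;> simp [Set.indicator_apply, h']
      rw [hind, integral_indicator hKkm, Measure.restrict_restrict hKkm, Set.inter_comm]
    rw [hres, cond_apply hSm]
    rw [smul_eq_mul, smul_eq_mul, ← mul_assoc]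
    congr 1
    rw [ENNReal.toReal_mul, ENNReal.toReal_inv, ENNReal.toReal_inv, mul_assoc,
      mul_inv_cancel₀ (ENNReal.toReal_ne_zero.mpr ⟨hE0, hEfin⟩), mul_one]
  rw [step1]
  exact Finset.sum_congr rfl fun k hkm => (step2 k hkm).trans (step3 k hkm)
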